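/- Let s > 1 be real and fix a point w in the complex upper half-plane. Define u(x, y) := Q_{s−1}(1 + ((x − Re w)² + (y − Im w)²)/(2·y·Im w)) for all (x, y) ∈ ℝ × (0, ∞) with (x, y) ≠ (Re w, Im w). Then u satisfies the partial differential equation y²·(∂²u/∂x² + ∂²u/∂y²) = s·(s−1)·u(x, y) on this domain; equivalently, the function g_s(z, w) := −2·Q_{s−1}(1 + |z − w|²/(2·Im z·Im w)) is an eigenfunction of the hyperbolic Laplacian Δ = −y²(∂²/∂x² + ∂²/∂y²) on ℍ∖{w} with eigenvalue s(1 − s). -/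

import Mathlib

open MeasureTheory
open Real

/-- The Legendre function of the second kind `Q_{s−1}(t)`, defined for `s > 1`, `t > 1` by
`Q_{s−1}(t) := ∫₀^∞ (t + √(t²−1)·cosh v)^(−s) dv`. -/
noncomputable def legendreQ (s t : ℝ) : ℝ :=
  ∫ v in Set.Ioi (0 : ℝ), (t + Real.sqrt (t ^ 2 - 1) * Real.cosh v) ^ (-s)

/-- The function `u(x, y) := Q_{s−1}(1 + ((x − Re w)² + (y − Im w)²)/(2·y·Im w))`;
for `z = x + iy` in the upper half-plane, the argument equals `cosh` of the hyperbolic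
distance from `z` to `w`, so `−2·u` is the Green's function kernel `g_s(z, w)`. -/
noncomputable def greenKernel (s : ℝ) (w : ℂ) (x y : ℝ) : ℝ :=
  legendreQ s (1 + ((x - w.re) ^ 2 + (y - w.im) ^ 2) / (2 * y * w.im))


namespace GKaux

noncomputable def phi (t v : ℝ) : ℝ := t + Real.sqrt (t ^ 2 - 1) * Real.cosh v

noncomputable def F0 (s t v : ℝ) : ℝ := phi t v ^ (-s)

noncomputable def F1 (s t v : ℝ) : ℝ :=
  -s * phi t v ^ (-s - 1) *
    ((Real.sqrt (t ^ 2 - 1) + t * Real.cosh v) / Real.sqrt (t ^ 2 - 1))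

noncomputable def F2 (s t v : ℝ) : ℝ :=
  s * (s + 1) * phi t v ^ (-s - 2) *
      ((Real.sqrt (t ^ 2 - 1) + t * Real.cosh v) / Real.sqrt (t ^ 2 - 1)) ^ 2
    + s * phi t v ^ (-s - 1) * (Real.cosh v / Real.sqrt (t ^ 2 - 1) ^ 3)

noncomputable def G (s t v : ℝ) : ℝ :=
  -(s / Real.sqrt (t ^ 2 - 1)) * (Real.sinh v * phi t v ^ (-s - 1))

variable {s t v x : ℝ}

lemma sq_pos (ht : 1 < t) : 0 < t ^ 2 - 1 := by nlinarith

lemma c_pos (ht : 1 < t) : 0 < Real.sqrt (t ^ 2 - 1) := Real.sqrt_pos.2 (sq_pos ht)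

lemma c_sq (ht : 1 < t) : Real.sqrt (t ^ 2 - 1) ^ 2 = t ^ 2 - 1 :=
  Real.sq_sqrt (sq_pos ht).le

lemma phi_pos (ht : 1 < t) (v : ℝ) : 0 < phi t v := by
  have h1 := (c_pos ht).le
  have h2 := (Real.cosh_pos (x := v)).le
  have : (0:ℝ) ≤ Real.sqrt (t ^ 2 - 1) * Real.cosh v := mul_nonneg h1 h2
  unfold phi; linarith

lemma c_cosh_le_phi (ht : 1 < t) (v : ℝ) :
    Real.sqrt (t ^ 2 - 1) * Real.cosh v ≤ phi t v := by
  unfold phi; linarith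

/-- Derivative of `phi` in `t`. -/
lemma hasDerivAt_phi_t (ht : 1 < t) (v : ℝ) :
    HasDerivAt (fun t => phi t v)
      ((Real.sqrt (t ^ 2 - 1) + t * Real.cosh v) / Real.sqrt (t ^ 2 - 1)) t := by
  have hq : HasDerivAt (fun t : ℝ => t ^ 2 - 1) (2 * t) t := by
    simpa using ((hasDerivAt_pow 2 t).sub_const 1)
  have hsq : HasDerivAt (fun t : ℝ => Real.sqrt (t ^ 2 - 1)) (2 * t / (2 * Real.sqrt (t ^ 2 - 1))) t :=
    hq.sqrt (sq_pos ht).ne'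
  have h := (hasDerivAt_id t).add (hsq.mul_const (Real.cosh v))
  have hc := (c_pos ht).ne'
  refine h.congr_deriv (Eq.symm ?_)
  have hc2 := c_sq ht
  field_simp

lemma hasDerivAt_F0 (ht : 1 < t) (v : ℝ) :
    HasDerivAt (fun t => F0 s t v) (F1 s t v) t := by
  have h := (hasDerivAt_phi_t ht v).rpow_const (p := -s) (Or.inl (phi_pos ht v).ne')
  refine h.congr_deriv (Eq.symm ?_)
  unfold F1
  have : -s - 1 = -s + -1 := by ring
  ring

lemma hasDerivAt_F1 (ht : 1 < t) (v : ℝ) :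
    HasDerivAt (fun t => F1 s t v) (F2 s t v) t := by
  have hc := c_pos ht
  have hc2 := c_sq ht
  have hq : HasDerivAt (fun t : ℝ => t ^ 2 - 1) (2 * t) t := by
    simpa using ((hasDerivAt_pow 2 t).sub_const 1)
  have hsq : HasDerivAt (fun t : ℝ => Real.sqrt (t ^ 2 - 1))
      (2 * t / (2 * Real.sqrt (t ^ 2 - 1))) t := hq.sqrt (sq_pos ht).ne'
  -- derivative of ψ t = (c t + t * cosh v) / c t
  have hnum : HasDerivAt (fun t : ℝ => Real.sqrt (t ^ 2 - 1) + t * Real.cosh v)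
      (2 * t / (2 * Real.sqrt (t ^ 2 - 1)) + Real.cosh v) t :=
    hsq.add ((hasDerivAt_id t).mul_const (Real.cosh v) |>.congr_deriv (by ring))
  have hpsi : HasDerivAt
      (fun t : ℝ => (Real.sqrt (t ^ 2 - 1) + t * Real.cosh v) / Real.sqrt (t ^ 2 - 1))
      (((2 * t / (2 * Real.sqrt (t ^ 2 - 1)) + Real.cosh v) * Real.sqrt (t ^ 2 - 1)
        - (Real.sqrt (t ^ 2 - 1) + t * Real.cosh v) * (2 * t / (2 * Real.sqrt (t ^ 2 - 1))))
        / Real.sqrt (t ^ 2 - 1) ^ 2) t := hnum.div hsq hc.ne'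
  have hpsi' : HasDerivAt
      (fun t : ℝ => (Real.sqrt (t ^ 2 - 1) + t * Real.cosh v) / Real.sqrt (t ^ 2 - 1))
      (-(Real.cosh v / Real.sqrt (t ^ 2 - 1) ^ 3)) t := by
    convert hpsi using 1
    have h3 : Real.sqrt (t ^ 2 - 1) ^ 3 = Real.sqrt (t ^ 2 - 1) * (t^2-1) := by
      rw [pow_succ' (M := ℝ), hc2]
    field_simp
    linear_combination (-Real.cosh v) * hc2
  have hpow : HasDerivAt (fun t : ℝ => phi t v ^ (-s - 1))
      ((Real.sqrt (t ^ 2 - 1) + t * Real.cosh v) / Real.sqrt (t ^ 2 - 1) * (-s - 1)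
        * phi t v ^ (-s - 2)) t := by
    have := (hasDerivAt_phi_t ht v).rpow_const (p := -s - 1) (Or.inl (phi_pos ht v).ne')
    rw [show (-s - 1 - 1 : ℝ) = -s - 2 by ring] at this
    exact this
  have h := (hpow.mul hpsi').const_mul (-s)
  have hfun : (fun t => F1 s t v) = fun t => -s * (phi t v ^ (-s - 1) *
      ((Real.sqrt (t ^ 2 - 1) + t * Real.cosh v) / Real.sqrt (t ^ 2 - 1))) := by
    funext t; unfold F1; ring
  rw [hfun]
  refine h.congr_deriv (Eq.symm ?_)
  unfold F2
  set c := Real.sqrt (t ^ 2 - 1)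
  set P2 := phi t v ^ (-s - 2)
  set P1 := phi t v ^ (-s - 1)
  set C := Real.cosh v
  field_simp
  ring

lemma hasDerivAt_phi_v (t v : ℝ) :
    HasDerivAt (fun v => phi t v) (Real.sqrt (t ^ 2 - 1) * Real.sinh v) v := by
  simpa [phi] using (((Real.hasDerivAt_cosh v).const_mul (Real.sqrt (t ^ 2 - 1))).const_add t)

lemma hasDerivAt_G (ht : 1 < t) (v : ℝ) :
    HasDerivAt (fun v => G s t v)
      ((t ^ 2 - 1) * F2 s t v + 2 * t * F1 s t v - s * (s - 1) * F0 s t v) v := by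
  have hc := c_pos ht
  have hc2 := c_sq ht
  have hφ := phi_pos ht
  have hpow : HasDerivAt (fun v => phi t v ^ (-s - 1))
      (Real.sqrt (t ^ 2 - 1) * Real.sinh v * (-s - 1) * phi t v ^ (-s - 2)) v := by
    have := (hasDerivAt_phi_v t v).rpow_const (p := -s - 1) (Or.inl (hφ v).ne')
    rw [show (-s - 1 - 1 : ℝ) = -s - 2 by ring] at this
    exact this
  have h := ((Real.hasDerivAt_sinh v).mul hpow).const_mul (-(s / Real.sqrt (t ^ 2 - 1)))
  have hfun : (fun v => G s t v) = fun v => -(s / Real.sqrt (t ^ 2 - 1)) *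
      (Real.sinh v * phi t v ^ (-s - 1)) := rfl
  rw [hfun]
  refine h.congr_deriv (Eq.symm ?_)
  have e1 : phi t v ^ (-s - 1) = phi t v ^ (-s - 2) * phi t v := by
    rw [show (-s - 1 : ℝ) = (-s - 2) + 1 by ring, Real.rpow_add (hφ v), Real.rpow_one]
  have e0 : phi t v ^ (-s) = phi t v ^ (-s - 2) * (phi t v * phi t v) := by
    rw [show (-s : ℝ) = (-s - 2) + 1 + 1 by ring, Real.rpow_add (hφ v),
      Real.rpow_add (hφ v), Real.rpow_one]
    ring
  unfold F0 F1 F2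
  rw [e0, e1]
  have hS : Real.sinh v ^ 2 = Real.cosh v ^ 2 - 1 := Real.sinh_sq v
  set c := Real.sqrt (t ^ 2 - 1) with hcdef
  set X := phi t v ^ (-s - 2) with hXdef
  set C := Real.cosh v
  set S := Real.sinh v
  have hphi : phi t v = t + c * C := rfl
  rw [hphi]
  field_simp
  linear_combination ((1)*s*X*c^3*C^2 + (-1)*s*X*t*C + (-1)*s*X*t^2*c*C^2 + (-2)*s^2*X*t*c^2*C + (-1)*s^2*X*t^2*c*C^2 + (-1)*s*X*c*C^2 + (-1)*s^2*X*c^3*C^2) * hc2 + ((-1)*s*X*c^3 + (-1)*s^2*X*c^3) * hS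

/-- master lower bound / rpow upper bound -/
lemma phi_rpow_le {t' t v p : ℝ} (ht' : 1 < t') (htt : t' ≤ t) (hv : 0 ≤ v) (hp : 0 ≤ p) :
    phi t v ^ (-p) ≤ (Real.sqrt (t' ^ 2 - 1) / 2) ^ (-p) * Real.exp (-(p * v)) := by
  have ht : 1 < t := lt_of_lt_of_le ht' htt
  have hc' : 0 < Real.sqrt (t' ^ 2 - 1) := c_pos ht'
  have hcc : Real.sqrt (t' ^ 2 - 1) ≤ Real.sqrt (t ^ 2 - 1) :=
    Real.sqrt_le_sqrt (by nlinarith)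
  have hcosh : Real.exp v / 2 ≤ Real.cosh v := by
    rw [Real.cosh_eq]; have := (Real.exp_pos (-v)).le; linarith
  have hlow : Real.sqrt (t' ^ 2 - 1) / 2 * Real.exp v ≤ phi t v := by
    have h1 : Real.sqrt (t' ^ 2 - 1) / 2 * Real.exp v
        = Real.sqrt (t' ^ 2 - 1) * (Real.exp v / 2) := by ring
    have h2 : Real.sqrt (t' ^ 2 - 1) * (Real.exp v / 2)
        ≤ Real.sqrt (t ^ 2 - 1) * Real.cosh v :=
      mul_le_mul hcc hcosh (by positivity) (Real.sqrt_nonneg _)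
    rw [h1]; exact h2.trans (c_cosh_le_phi ht v)
  have hpos : 0 < Real.sqrt (t' ^ 2 - 1) / 2 * Real.exp v := by positivity
  calc phi t v ^ (-p) ≤ (Real.sqrt (t' ^ 2 - 1) / 2 * Real.exp v) ^ (-p) :=
        Real.rpow_le_rpow_of_nonpos hpos hlow (neg_nonpos.2 hp)
    _ = (Real.sqrt (t' ^ 2 - 1) / 2) ^ (-p) * Real.exp (-(p * v)) := by
        rw [Real.mul_rpow (by positivity) (Real.exp_pos v).le, ← Real.exp_mul,
          show v * -p = -(p * v) by ring]

lemma cosh_le_exp' (hv : 0 ≤ v) : Real.cosh v ≤ Real.exp v := by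
  rw [Real.cosh_eq]
  have := Real.exp_le_exp.2 (neg_le_self hv)
  linarith

lemma psi_nonneg (ht : 1 < t) (v : ℝ) :
    0 ≤ (Real.sqrt (t ^ 2 - 1) + t * Real.cosh v) / Real.sqrt (t ^ 2 - 1) := by
  have := c_pos ht
  have := (Real.cosh_pos (x := v))
  positivity

lemma psi_le {t' M : ℝ} (ht' : 1 < t') (htt : t' ≤ t) (htM : t ≤ M) (hv : 0 ≤ v) :
    (Real.sqrt (t ^ 2 - 1) + t * Real.cosh v) / Real.sqrt (t ^ 2 - 1)
      ≤ (1 + M / Real.sqrt (t' ^ 2 - 1)) * Real.exp v := by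
  have ht : 1 < t := lt_of_lt_of_le ht' htt
  have hc' : 0 < Real.sqrt (t' ^ 2 - 1) := c_pos ht'
  have hc : 0 < Real.sqrt (t ^ 2 - 1) := c_pos ht
  have hcc : Real.sqrt (t' ^ 2 - 1) ≤ Real.sqrt (t ^ 2 - 1) :=
    Real.sqrt_le_sqrt (by nlinarith)
  have h1 : (Real.sqrt (t ^ 2 - 1) + t * Real.cosh v) / Real.sqrt (t ^ 2 - 1)
      = 1 + (t / Real.sqrt (t ^ 2 - 1)) * Real.cosh v := by field_simp
  rw [h1]
  have hcoshv := Real.cosh_pos (x := v)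
  have h1le : (1:ℝ) ≤ Real.cosh v := Real.one_le_cosh v
  have hexp : Real.cosh v ≤ Real.exp v := cosh_le_exp' hv
  have h2 : t / Real.sqrt (t ^ 2 - 1) ≤ M / Real.sqrt (t' ^ 2 - 1) :=
    div_le_div₀ (by linarith [ht'.le.trans (htt.trans htM)]) htM hc' hcc
  have hM : 0 ≤ M / Real.sqrt (t' ^ 2 - 1) := by
    have : (0:ℝ) ≤ M := by linarith [ht'.le.trans (htt.trans htM)]
    positivity
  have h1exp : (1:ℝ) ≤ Real.exp v := by
    rw [show (1:ℝ) = Real.exp 0 by simp]; exact Real.exp_le_exp.2 hv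
  calc 1 + t / Real.sqrt (t ^ 2 - 1) * Real.cosh v
      ≤ 1 + (M / Real.sqrt (t' ^ 2 - 1)) * Real.cosh v := by
        have := mul_le_mul_of_nonneg_right h2 hcoshv.le; linarith
    _ ≤ Real.exp v + (M / Real.sqrt (t' ^ 2 - 1)) * Real.exp v := by
        have := mul_le_mul_of_nonneg_left hexp hM
        have := h1exp
        linarith
    _ = (1 + M / Real.sqrt (t' ^ 2 - 1)) * Real.exp v := by ring

section bounds
variable {t' M : ℝ}

lemma F0_bound (hs : 0 < s) (ht' : 1 < t') (htx : t' ≤ x) (hv : 0 ≤ v) :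
    ‖F0 s x v‖ ≤ (Real.sqrt (t' ^ 2 - 1) / 2) ^ (-s) * Real.exp (-s * v) := by
  have hx : 1 < x := lt_of_lt_of_le ht' htx
  have h0 : 0 ≤ F0 s x v := (Real.rpow_pos_of_pos (phi_pos hx v) _).le
  rw [Real.norm_eq_abs, abs_of_nonneg h0]
  have := phi_rpow_le ht' htx hv hs.le
  simpa [neg_mul, F0] using this

lemma F1_bound (hs : 0 < s) (ht' : 1 < t') (htx : t' ≤ x) (hxM : x ≤ M) (hv : 0 ≤ v) :
    ‖F1 s x v‖ ≤ s * (Real.sqrt (t' ^ 2 - 1) / 2) ^ (-s - 1)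
        * (1 + M / Real.sqrt (t' ^ 2 - 1)) * Real.exp (-s * v) := by
  have hx : 1 < x := lt_of_lt_of_le ht' htx
  have hc' : 0 < Real.sqrt (t' ^ 2 - 1) := c_pos ht'
  have hP1 : (0:ℝ) ≤ phi x v ^ (-s - 1) := (Real.rpow_pos_of_pos (phi_pos hx v) _).le
  have hψ := psi_nonneg hx v
  have habs : ‖F1 s x v‖ = s * phi x v ^ (-s - 1) *
      ((Real.sqrt (x ^ 2 - 1) + x * Real.cosh v) / Real.sqrt (x ^ 2 - 1)) := by
    have hF : F1 s x v = -(s * phi x v ^ (-s - 1) *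
        ((Real.sqrt (x ^ 2 - 1) + x * Real.cosh v) / Real.sqrt (x ^ 2 - 1))) := by
      unfold F1; ring
    rw [Real.norm_eq_abs, hF, abs_neg,
      abs_of_nonneg (mul_nonneg (mul_nonneg hs.le hP1) hψ)]
  rw [habs]
  have h1 : phi x v ^ (-s - 1)
      ≤ (Real.sqrt (t' ^ 2 - 1) / 2) ^ (-s - 1) * Real.exp (-((s + 1) * v)) := by
    have := phi_rpow_le (p := s + 1) ht' htx hv (by linarith)
    rwa [show -(s + 1) = -s - 1 by ring] at this
  have h2 := psi_le (t := x) ht' htx hxM hv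
  have hM0 : 0 ≤ 1 + M / Real.sqrt (t' ^ 2 - 1) := by
    have : (0:ℝ) ≤ M := by linarith
    positivity
  calc s * phi x v ^ (-s - 1) *
        ((Real.sqrt (x ^ 2 - 1) + x * Real.cosh v) / Real.sqrt (x ^ 2 - 1))
      ≤ s * ((Real.sqrt (t' ^ 2 - 1) / 2) ^ (-s - 1) * Real.exp (-((s + 1) * v)))
          * ((1 + M / Real.sqrt (t' ^ 2 - 1)) * Real.exp v) := by
        refine mul_le_mul (mul_le_mul le_rfl h1 hP1 (by positivity)) h2 hψ (by positivity)
    _ = s * (Real.sqrt (t' ^ 2 - 1) / 2) ^ (-s - 1) * (1 + M / Real.sqrt (t' ^ 2 - 1))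
          * (Real.exp (-((s + 1) * v)) * Real.exp v) := by ring
    _ = s * (Real.sqrt (t' ^ 2 - 1) / 2) ^ (-s - 1) * (1 + M / Real.sqrt (t' ^ 2 - 1))
          * Real.exp (-s * v) := by
        rw [← Real.exp_add, show -((s + 1) * v) + v = -s * v by ring]

lemma F2_bound (hs : 0 < s) (ht' : 1 < t') (htx : t' ≤ x) (hxM : x ≤ M) (hv : 0 ≤ v) :
    ‖F2 s x v‖ ≤ (s * (s + 1) * (Real.sqrt (t' ^ 2 - 1) / 2) ^ (-s - 2)
          * (1 + M / Real.sqrt (t' ^ 2 - 1)) ^ 2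
        + s * (Real.sqrt (t' ^ 2 - 1) / 2) ^ (-s - 1) / Real.sqrt (t' ^ 2 - 1) ^ 3)
        * Real.exp (-s * v) := by
  have hx : 1 < x := lt_of_lt_of_le ht' htx
  have hc' : 0 < Real.sqrt (t' ^ 2 - 1) := c_pos ht'
  have hc : 0 < Real.sqrt (x ^ 2 - 1) := c_pos hx
  have hcc : Real.sqrt (t' ^ 2 - 1) ≤ Real.sqrt (x ^ 2 - 1) :=
    Real.sqrt_le_sqrt (by nlinarith)
  have hP1 : (0:ℝ) ≤ phi x v ^ (-s - 1) := (Real.rpow_pos_of_pos (phi_pos hx v) _).le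
  have hP2 : (0:ℝ) ≤ phi x v ^ (-s - 2) := (Real.rpow_pos_of_pos (phi_pos hx v) _).le
  have hψ := psi_nonneg hx v
  have hcoshv := Real.cosh_pos (x := v)
  have habs : ‖F2 s x v‖ = F2 s x v := by
    rw [Real.norm_eq_abs, abs_of_nonneg]
    unfold F2
    have hA : (0:ℝ) ≤ s * (s + 1) * phi x v ^ (-s - 2) *
        ((Real.sqrt (x ^ 2 - 1) + x * Real.cosh v) / Real.sqrt (x ^ 2 - 1)) ^ 2 :=
      mul_nonneg (mul_nonneg (mul_nonneg hs.le (by linarith)) hP2) (sq_nonneg _)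
    have hB : (0:ℝ) ≤ s * phi x v ^ (-s - 1) * (Real.cosh v / Real.sqrt (x ^ 2 - 1) ^ 3) :=
      mul_nonneg (mul_nonneg hs.le hP1) (by positivity)
    linarith
  rw [habs]
  have h2 : phi x v ^ (-s - 2)
      ≤ (Real.sqrt (t' ^ 2 - 1) / 2) ^ (-s - 2) * Real.exp (-((s + 2) * v)) := by
    have := phi_rpow_le (p := s + 2) ht' htx hv (by linarith)
    rwa [show -(s + 2) = -s - 2 by ring] at this
  have h1 : phi x v ^ (-s - 1)
      ≤ (Real.sqrt (t' ^ 2 - 1) / 2) ^ (-s - 1) * Real.exp (-((s + 1) * v)) := by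
    have := phi_rpow_le (p := s + 1) ht' htx hv (by linarith)
    rwa [show -(s + 1) = -s - 1 by ring] at this
  have hψle := psi_le (t := x) ht' htx hxM hv
  have hM0 : 0 ≤ 1 + M / Real.sqrt (t' ^ 2 - 1) := by
    have : (0:ℝ) ≤ M := by linarith
    positivity
  have hcd : Real.cosh v / Real.sqrt (x ^ 2 - 1) ^ 3
      ≤ Real.exp v / Real.sqrt (t' ^ 2 - 1) ^ 3 :=
    div_le_div₀ (Real.exp_pos v).le (cosh_le_exp' hv) (by positivity)
      (by gcongr)
  unfold F2
  have term1 : s * (s + 1) * phi x v ^ (-s - 2) *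
        ((Real.sqrt (x ^ 2 - 1) + x * Real.cosh v) / Real.sqrt (x ^ 2 - 1)) ^ 2
      ≤ s * (s + 1) * (Real.sqrt (t' ^ 2 - 1) / 2) ^ (-s - 2)
          * (1 + M / Real.sqrt (t' ^ 2 - 1)) ^ 2 * Real.exp (-s * v) := by
    calc s * (s + 1) * phi x v ^ (-s - 2) *
          ((Real.sqrt (x ^ 2 - 1) + x * Real.cosh v) / Real.sqrt (x ^ 2 - 1)) ^ 2
        ≤ s * (s + 1) * ((Real.sqrt (t' ^ 2 - 1) / 2) ^ (-s - 2) * Real.exp (-((s + 2) * v)))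
            * ((1 + M / Real.sqrt (t' ^ 2 - 1)) * Real.exp v) ^ 2 := by
          refine mul_le_mul (mul_le_mul le_rfl h2 hP2 (by positivity))
            (pow_le_pow_left₀ hψ hψle 2) (by positivity) (by positivity)
      _ = s * (s + 1) * (Real.sqrt (t' ^ 2 - 1) / 2) ^ (-s - 2)
            * (1 + M / Real.sqrt (t' ^ 2 - 1)) ^ 2
            * (Real.exp (-((s + 2) * v)) * (Real.exp v * Real.exp v)) := by ring
      _ = _ := by
          rw [← Real.exp_add, ← Real.exp_add,
            show -((s + 2) * v) + (v + v) = -s * v by ring]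
  have term2 : s * phi x v ^ (-s - 1) * (Real.cosh v / Real.sqrt (x ^ 2 - 1) ^ 3)
      ≤ s * (Real.sqrt (t' ^ 2 - 1) / 2) ^ (-s - 1) / Real.sqrt (t' ^ 2 - 1) ^ 3
          * Real.exp (-s * v) := by
    calc s * phi x v ^ (-s - 1) * (Real.cosh v / Real.sqrt (x ^ 2 - 1) ^ 3)
        ≤ s * ((Real.sqrt (t' ^ 2 - 1) / 2) ^ (-s - 1) * Real.exp (-((s + 1) * v)))
            * (Real.exp v / Real.sqrt (t' ^ 2 - 1) ^ 3) := by
          refine mul_le_mul (mul_le_mul le_rfl h1 hP1 (by positivity)) hcd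
            (by positivity) (by positivity)
      _ = s * (Real.sqrt (t' ^ 2 - 1) / 2) ^ (-s - 1) / Real.sqrt (t' ^ 2 - 1) ^ 3
            * (Real.exp (-((s + 1) * v)) * Real.exp v) := by ring
      _ = _ := by rw [← Real.exp_add, show -((s + 1) * v) + v = -s * v by ring]
  calc s * (s + 1) * phi x v ^ (-s - 2) *
        ((Real.sqrt (x ^ 2 - 1) + x * Real.cosh v) / Real.sqrt (x ^ 2 - 1)) ^ 2
      + s * phi x v ^ (-s - 1) * (Real.cosh v / Real.sqrt (x ^ 2 - 1) ^ 3)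
      ≤ s * (s + 1) * (Real.sqrt (t' ^ 2 - 1) / 2) ^ (-s - 2)
          * (1 + M / Real.sqrt (t' ^ 2 - 1)) ^ 2 * Real.exp (-s * v)
        + s * (Real.sqrt (t' ^ 2 - 1) / 2) ^ (-s - 1) / Real.sqrt (t' ^ 2 - 1) ^ 3
          * Real.exp (-s * v) := add_le_add term1 term2
    _ = _ := by ring

end bounds

section continuity

lemma cont_phi (x : ℝ) : Continuous (fun v => phi x v) :=
  continuous_const.add (continuous_const.mul Real.continuous_cosh)

lemma cont_F0 (hx : 1 < x) : Continuous (fun v => F0 s x v) :=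
  (cont_phi x).rpow_const (fun v => Or.inl (phi_pos hx v).ne')

lemma cont_F1 (hx : 1 < x) : Continuous (fun v => F1 s x v) := by
  refine (continuous_const.mul ((cont_phi x).rpow_const
    (fun v => Or.inl (phi_pos hx v).ne'))).mul ?_
  exact (continuous_const.add (continuous_const.mul Real.continuous_cosh)).div_const _

lemma cont_F2 (hx : 1 < x) : Continuous (fun v => F2 s x v) := by
  refine ((continuous_const.mul ((cont_phi x).rpow_const
    (fun v => Or.inl (phi_pos hx v).ne'))).mul ?_).add
    ((continuous_const.mul ((cont_phi x).rpow_const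
      (fun v => Or.inl (phi_pos hx v).ne'))).mul ?_)
  · exact (((continuous_const.add (continuous_const.mul
      Real.continuous_cosh)).div_const _).pow 2)
  · exact Real.continuous_cosh.div_const _

end continuity

lemma bound_integrable (hs : 0 < s) (K : ℝ) :
    IntegrableOn (fun v => K * Real.exp (-s * v)) (Set.Ioi (0:ℝ)) :=
  (exp_neg_integrableOn_Ioi 0 hs).const_mul K

lemma ae_bound_of {f : ℝ → ℝ} {K : ℝ} (hK : 0 ≤ K)
    (h : ∀ v, 0 ≤ v → ‖f v‖ ≤ K * Real.exp (-s * v)) :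
    ∀ᵐ v ∂(volume.restrict (Set.Ioi (0:ℝ))), ‖f v‖ ≤ ‖K * Real.exp (-s * v)‖ := by
  refine (ae_restrict_iff' measurableSet_Ioi).2 (Filter.Eventually.of_forall fun v hv => ?_)
  have := h v (le_of_lt hv)
  exact this.trans (le_abs_self _)

lemma int_F0 (hs : 0 < s) (ht : 1 < t) : IntegrableOn (fun v => F0 s t v) (Set.Ioi (0:ℝ)) := by
  refine Integrable.mono (bound_integrable hs ((Real.sqrt (t ^ 2 - 1) / 2) ^ (-s)))
    (cont_F0 ht).aestronglyMeasurable ?_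
  exact ae_bound_of (by positivity) (fun v hv => F0_bound hs ht le_rfl hv)

lemma ball_facts (ht : 1 < t) :
    ∀ x ∈ Metric.ball t ((t - 1) / 2), (t + 1) / 2 ≤ x ∧ x ≤ t + (t - 1) / 2 ∧ 1 < x := by
  intro x hx
  rw [Metric.mem_ball, Real.dist_eq, abs_lt] at hx
  constructor
  · linarith [hx.1]
  constructor
  · linarith [hx.2]
  · linarith [hx.1]

lemma Q_hasDeriv (hs : 1 < s) (ht : 1 < t) :
    IntegrableOn (fun v => F1 s t v) (Set.Ioi (0:ℝ)) ∧
      HasDerivAt (fun t => legendreQ s t) (∫ v in Set.Ioi (0:ℝ), F1 s t v) t := by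
  have hs0 : 0 < s := by linarith
  have ht' : 1 < (t + 1) / 2 := by linarith
  have hε : 0 < (t - 1) / 2 := by linarith
  set K : ℝ := s * (Real.sqrt (((t + 1) / 2) ^ 2 - 1) / 2) ^ (-s - 1)
      * (1 + (t + (t - 1) / 2) / Real.sqrt (((t + 1) / 2) ^ 2 - 1)) with hK
  have hKpos : 0 ≤ K := by
    have := c_pos ht'
    have h1 : (0:ℝ) ≤ 1 + (t + (t - 1) / 2) / Real.sqrt (((t + 1) / 2) ^ 2 - 1) := by
      positivity
    positivity
  have h := hasDerivAt_integral_of_dominated_loc_of_deriv_le (F := fun x v => F0 s x v)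
      (F' := fun x v => F1 s x v) (bound := fun v => ‖K * Real.exp (-s * v)‖)
      (μ := volume.restrict (Set.Ioi (0:ℝ))) (x₀ := t) (Metric.ball_mem_nhds t hε)
      ?_ (int_F0 hs0 ht) (cont_F1 ht).aestronglyMeasurable ?_ ?_ ?_
  · exact ⟨h.1, h.2⟩
  · refine Filter.eventually_of_mem (Metric.ball_mem_nhds t hε) (fun x hx => ?_)
    exact (cont_F0 (ball_facts ht x hx).2.2).aestronglyMeasurable
  · refine (ae_restrict_iff' measurableSet_Ioi).2 (Filter.Eventually.of_forall fun v hv x hx => ?_)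
    obtain ⟨h1, h2, h3⟩ := ball_facts ht x hx
    exact (F1_bound hs0 ht' h1 h2 (le_of_lt hv)).trans (le_abs_self _)
  · exact (bound_integrable hs0 K).norm
  · exact Filter.Eventually.of_forall fun v x hx => hasDerivAt_F0 (ball_facts ht x hx).2.2 v

lemma Q1_hasDeriv (hs : 1 < s) (ht : 1 < t) :
    IntegrableOn (fun v => F2 s t v) (Set.Ioi (0:ℝ)) ∧
      HasDerivAt (fun t => ∫ v in Set.Ioi (0:ℝ), F1 s t v)
        (∫ v in Set.Ioi (0:ℝ), F2 s t v) t := by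
  have hs0 : 0 < s := by linarith
  have ht' : 1 < (t + 1) / 2 := by linarith
  have hε : 0 < (t - 1) / 2 := by linarith
  set K : ℝ := s * (s + 1) * (Real.sqrt (((t + 1) / 2) ^ 2 - 1) / 2) ^ (-s - 2)
          * (1 + (t + (t - 1) / 2) / Real.sqrt (((t + 1) / 2) ^ 2 - 1)) ^ 2
        + s * (Real.sqrt (((t + 1) / 2) ^ 2 - 1) / 2) ^ (-s - 1)
          / Real.sqrt (((t + 1) / 2) ^ 2 - 1) ^ 3 with hK
  have h := hasDerivAt_integral_of_dominated_loc_of_deriv_le (F := fun x v => F1 s x v)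
      (F' := fun x v => F2 s x v) (bound := fun v => ‖K * Real.exp (-s * v)‖)
      (μ := volume.restrict (Set.Ioi (0:ℝ))) (x₀ := t) (Metric.ball_mem_nhds t hε)
      ?_ (Q_hasDeriv hs ht).1 (cont_F2 ht).aestronglyMeasurable ?_ ?_ ?_
  · exact ⟨h.1, h.2⟩
  · refine Filter.eventually_of_mem (Metric.ball_mem_nhds t hε) (fun x hx => ?_)
    exact (cont_F1 (ball_facts ht x hx).2.2).aestronglyMeasurable
  · refine (ae_restrict_iff' measurableSet_Ioi).2 (Filter.Eventually.of_forall fun v hv x hx => ?_)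
    obtain ⟨h1, h2, h3⟩ := ball_facts ht x hx
    exact (F2_bound hs0 ht' h1 h2 (le_of_lt hv)).trans (le_abs_self _)
  · exact (bound_integrable hs0 K).norm
  · exact Filter.Eventually.of_forall fun v x hx => hasDerivAt_F1 (ball_facts ht x hx).2.2 v

lemma tendsto_G (hs : 1 < s) (ht : 1 < t) :
    Filter.Tendsto (fun v => G s t v) Filter.atTop (nhds 0) := by
  have hs0 : 0 < s := by linarith
  have hc := c_pos ht
  set c := Real.sqrt (t ^ 2 - 1)
  have hbound : ∀ᶠ v in Filter.atTop,
      ‖G s t v‖ ≤ s / c * (c / 2) ^ (-s - 1) * Real.exp (-s * v) := by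
    filter_upwards [Filter.eventually_ge_atTop (0:ℝ)] with v hv
    have hsinh : 0 ≤ Real.sinh v := by
      rw [Real.sinh_eq]
      have := Real.exp_le_exp.2 (neg_le_self hv)
      linarith
    have hsinhle : Real.sinh v ≤ Real.exp v := by
      rw [Real.sinh_eq]
      have := (Real.exp_pos (-v)).le
      have := (Real.exp_pos v).le
      linarith
    have hP1 : (0:ℝ) ≤ phi t v ^ (-s - 1) := (Real.rpow_pos_of_pos (phi_pos ht v) _).le
    have habs : ‖G s t v‖ = s / c * (Real.sinh v * phi t v ^ (-s - 1)) := by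
      rw [Real.norm_eq_abs, G, neg_mul, abs_neg,
        abs_of_nonneg (mul_nonneg (by positivity) (mul_nonneg hsinh hP1))]
    rw [habs]
    have hple : phi t v ^ (-s - 1) ≤ (c / 2) ^ (-s - 1) * Real.exp (-((s + 1) * v)) := by
      have := phi_rpow_le (p := s + 1) ht le_rfl hv (by linarith)
      rwa [show -(s + 1) = -s - 1 by ring] at this
    calc s / c * (Real.sinh v * phi t v ^ (-s - 1))
        ≤ s / c * (Real.exp v * ((c / 2) ^ (-s - 1) * Real.exp (-((s + 1) * v)))) := by
          refine mul_le_mul_of_nonneg_left ?_ (by positivity)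
          exact mul_le_mul hsinhle hple hP1 (Real.exp_pos v).le
      _ = s / c * (c / 2) ^ (-s - 1) * (Real.exp v * Real.exp (-((s + 1) * v))) := by ring
      _ = s / c * (c / 2) ^ (-s - 1) * Real.exp (-s * v) := by
          rw [← Real.exp_add, show v + -((s + 1) * v) = -s * v by ring]
  have hlim : Filter.Tendsto (fun v => s / c * (c / 2) ^ (-s - 1) * Real.exp (-s * v))
      Filter.atTop (nhds 0) := by
    have h1 : Filter.Tendsto (fun v : ℝ => -s * v) Filter.atTop Filter.atBot :=
      Filter.tendsto_id.const_mul_atTop_of_neg (by linarith)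
    have h2 := Real.tendsto_exp_atBot.comp h1
    have := h2.const_mul (s / c * (c / 2) ^ (-s - 1))
    simpa using this
  exact squeeze_zero_norm' hbound hlim

lemma legendreQ_ODE (hs : 1 < s) (ht : 1 < t) :
    (t ^ 2 - 1) * (∫ v in Set.Ioi (0:ℝ), F2 s t v)
        + 2 * t * (∫ v in Set.Ioi (0:ℝ), F1 s t v)
      = s * (s - 1) * legendreQ s t := by
  have hs0 : 0 < s := by linarith
  have i0 := int_F0 hs0 ht
  have i1 := (Q_hasDeriv hs ht).1
  have i2 := (Q1_hasDeriv hs ht).1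
  have hG0 : G s t 0 = 0 := by simp [G]
  have key : (∫ v in Set.Ioi (0:ℝ),
      ((t ^ 2 - 1) * F2 s t v + 2 * t * F1 s t v - s * (s - 1) * F0 s t v)) = 0 - G s t 0 := by
    refine integral_Ioi_of_hasDerivAt_of_tendsto' (f := fun v => G s t v)
      (fun v _ => hasDerivAt_G ht v) ?_ (tendsto_G hs ht)
    exact ((i2.const_mul _).add (i1.const_mul _)).sub (i0.const_mul _)
  rw [hG0, sub_zero] at key
  have key2 : (t ^ 2 - 1) * (∫ v in Set.Ioi (0:ℝ), F2 s t v)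
      + 2 * t * (∫ v in Set.Ioi (0:ℝ), F1 s t v)
      - s * (s - 1) * (∫ v in Set.Ioi (0:ℝ), F0 s t v) = 0 := by
    have iA : IntegrableOn (fun v => (t ^ 2 - 1) * F2 s t v + 2 * t * F1 s t v)
        (Set.Ioi (0:ℝ)) := by exact (i2.const_mul _).add (i1.const_mul _)
    have iB : IntegrableOn (fun v => s * (s - 1) * F0 s t v) (Set.Ioi (0:ℝ)) :=
      i0.const_mul _
    rw [← integral_const_mul, ← integral_const_mul, ← integral_const_mul,
      ← integral_add (i2.const_mul _) (i1.const_mul _),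
      ← integral_sub iA iB]
    exact key
  have hQ : legendreQ s t = ∫ v in Set.Ioi (0:ℝ), F0 s t v := rfl
  rw [hQ]
  linarith [key2]

noncomputable def Q1 (s t : ℝ) : ℝ := ∫ v in Set.Ioi (0:ℝ), F1 s t v
noncomputable def Q2 (s t : ℝ) : ℝ := ∫ v in Set.Ioi (0:ℝ), F2 s t v

end GKaux

/-- Let `s > 1` be real and fix a point `w` in the complex upper
half-plane.  Define `u(x, y) := Q_{s−1}(1 + ((x − Re w)² + (y − Im w)²)/(2·y·Im w))` for
`(x, y) ∈ ℝ × (0, ∞)` with `(x, y) ≠ (Re w, Im w)`.  Then `u` satisfies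
`y²·(∂²u/∂x² + ∂²u/∂y²) = s·(s−1)·u(x, y)` on this domain; equivalently,
`g_s(z, w) = −2·Q_{s−1}(1 + |z − w|²/(2·Im z·Im w))` is an eigenfunction of the hyperbolic
Laplacian `Δ = −y²(∂²/∂x² + ∂²/∂y²)` on `ℍ ∖ {w}` with eigenvalue `s(1 − s)`. -/

theorem greenKernel_laplace_eigenfunction (s : ℝ) (hs : 1 < s) (w : ℂ) (hw : 0 < w.im)
    (x y : ℝ) (hy : 0 < y) (hne : (x, y) ≠ (w.re, w.im)) :
    y ^ 2 * (deriv (deriv (fun x' : ℝ => greenKernel s w x' y)) x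
        + deriv (deriv (fun y' : ℝ => greenKernel s w x y')) y)
      = s * (s - 1) * greenKernel s w x y := by
  set a := w.re with hadef
  set b := w.im with hbdef
  have hb : 0 < b := hw
  -- T is > 1 away from (a,b)
  have hT1 : ∀ x' y' : ℝ, 0 < y' → (x', y') ≠ (a, b) →
      1 < 1 + ((x' - a) ^ 2 + (y' - b) ^ 2) / (2 * y' * b) := by
    intro x' y' hy' hne'
    have hxy : x' ≠ a ∨ y' ≠ b := by
      by_contra h
      push_neg at h
      exact hne' (by rw [h.1, h.2])
    have hρ : 0 < (x' - a) ^ 2 + (y' - b) ^ 2 := by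
      rcases hxy with h | h
      · have h2 : (0:ℝ) < (x' - a) ^ 2 :=
          lt_of_le_of_ne (sq_nonneg _) (Ne.symm (pow_ne_zero 2 (sub_ne_zero.2 h)))
        nlinarith [sq_nonneg (y' - b)]
      · have h2 : (0:ℝ) < (y' - b) ^ 2 :=
          lt_of_le_of_ne (sq_nonneg _) (Ne.symm (pow_ne_zero 2 (sub_ne_zero.2 h)))
        nlinarith [sq_nonneg (x' - a)]
    have : 0 < ((x' - a) ^ 2 + (y' - b) ^ 2) / (2 * y' * b) := by positivity
    linarith
  -- derivative of T in the first variable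
  have hTx : ∀ x' y' : ℝ, 0 < y' →
      HasDerivAt (fun u : ℝ => 1 + ((u - a) ^ 2 + (y' - b) ^ 2) / (2 * y' * b))
        ((x' - a) / (y' * b)) x' := by
    intro x' y' hy'
    have h1 : HasDerivAt (fun u : ℝ => (u - a) ^ 2 + (y' - b) ^ 2) (2 * (x' - a)) x' := by
      have := (((hasDerivAt_id x').sub_const a).pow 2).add_const ((y' - b) ^ 2)
      refine this.congr_deriv (Eq.symm ?_)
      all_goals try simp only [id_eq]
      all_goals try push_cast
      all_goals ring
    have h2 := (h1.div_const (2 * y' * b)).const_add 1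
    refine h2.congr_deriv (Eq.symm ?_)
    field_simp
  -- derivative of T in the second variable
  have hTy : ∀ y' : ℝ, 0 < y' →
      HasDerivAt (fun u : ℝ => 1 + ((x - a) ^ 2 + (u - b) ^ 2) / (2 * u * b))
        ((y' ^ 2 - b ^ 2 - (x - a) ^ 2) / (2 * y' ^ 2 * b)) y' := by
    intro y' hy'
    have hnum : HasDerivAt (fun u : ℝ => (x - a) ^ 2 + (u - b) ^ 2) (2 * (y' - b)) y' := by
      have := (((hasDerivAt_id y').sub_const b).pow 2).const_add ((x - a) ^ 2)
      refine this.congr_deriv (Eq.symm ?_)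
      all_goals try simp only [id_eq]
      all_goals try push_cast
      all_goals ring
    have hden : HasDerivAt (fun u : ℝ => 2 * u * b) (2 * b) y' := by
      have := ((hasDerivAt_id y').const_mul 2).mul_const b
      refine this.congr_deriv (Eq.symm ?_)
      all_goals try simp only [id_eq]
      all_goals ring
    have hden0 : 2 * y' * b ≠ 0 := by positivity
    have h2 := (hnum.div hden hden0).const_add 1
    refine h2.congr_deriv (Eq.symm ?_)
    field_simp
    ring
  ---- x - direction
  have hUx : IsOpen {x' : ℝ | (x', y) ≠ (a, b)} := by
    have hc : Continuous fun x' : ℝ => ((x', y) : ℝ × ℝ) := continuous_id.prodMk continuous_const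
    exact (isOpen_ne (x := ((a, b) : ℝ × ℝ))).preimage hc
  have hxmem : x ∈ {x' : ℝ | (x', y) ≠ (a, b)} := hne
  have hDx : ∀ x' ∈ {x' : ℝ | (x', y) ≠ (a, b)},
      HasDerivAt (fun u => greenKernel s w u y)
        (GKaux.Q1 s (1 + ((x' - a) ^ 2 + (y - b) ^ 2) / (2 * y * b)) * ((x' - a) / (y * b))) x' := by
    intro x' hx'
    have hT := hT1 x' y hy hx'
    have := (GKaux.Q_hasDeriv hs hT).2.comp x' (hTx x' y hy)
    exact this
  have hev : deriv (fun u => greenKernel s w u y) =ᶠ[nhds x]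
      fun x' => GKaux.Q1 s (1 + ((x' - a) ^ 2 + (y - b) ^ 2) / (2 * y * b)) * ((x' - a) / (y * b)) :=
    Filter.eventuallyEq_of_mem (hUx.mem_nhds hxmem) (fun x' hx' => (hDx x' hx').deriv)
  have hD2x : HasDerivAt
      (fun x' => GKaux.Q1 s (1 + ((x' - a) ^ 2 + (y - b) ^ 2) / (2 * y * b)) * ((x' - a) / (y * b)))
      (GKaux.Q2 s (1 + ((x - a) ^ 2 + (y - b) ^ 2) / (2 * y * b)) * ((x - a) / (y * b)) ^ 2
        + GKaux.Q1 s (1 + ((x - a) ^ 2 + (y - b) ^ 2) / (2 * y * b)) * (1 / (y * b))) x := by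
    have hcomp := (GKaux.Q1_hasDeriv hs (hT1 x y hy hne)).2.comp x (hTx x y hy)
    have hlin : HasDerivAt (fun x' : ℝ => (x' - a) / (y * b)) (1 / (y * b)) x := by
      have := ((hasDerivAt_id x).sub_const a).div_const (y * b)
      simpa using this
    have := hcomp.mul hlin
    refine this.congr_deriv (Eq.symm ?_)
    simp only [Function.comp_apply, GKaux.Q1, GKaux.Q2]
    ring
  have dxx : deriv (deriv (fun x' : ℝ => greenKernel s w x' y)) x
      = GKaux.Q2 s (1 + ((x - a) ^ 2 + (y - b) ^ 2) / (2 * y * b)) * ((x - a) / (y * b)) ^ 2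
        + GKaux.Q1 s (1 + ((x - a) ^ 2 + (y - b) ^ 2) / (2 * y * b)) * (1 / (y * b)) := by
    rw [Filter.EventuallyEq.deriv_eq hev]
    exact hD2x.deriv
  ---- y - direction
  have hUy : IsOpen {y' : ℝ | 0 < y' ∧ (x, y') ≠ (a, b)} := by
    have hc : Continuous fun y' : ℝ => ((x, y') : ℝ × ℝ) := continuous_const.prodMk continuous_id
    exact isOpen_Ioi.inter ((isOpen_ne (x := ((a, b) : ℝ × ℝ))).preimage hc)
  have hymem : y ∈ {y' : ℝ | 0 < y' ∧ (x, y') ≠ (a, b)} := ⟨hy, hne⟩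
  have hDy : ∀ y' ∈ {y' : ℝ | 0 < y' ∧ (x, y') ≠ (a, b)},
      HasDerivAt (fun u => greenKernel s w x u)
        (GKaux.Q1 s (1 + ((x - a) ^ 2 + (y' - b) ^ 2) / (2 * y' * b))
          * ((y' ^ 2 - b ^ 2 - (x - a) ^ 2) / (2 * y' ^ 2 * b))) y' := by
    intro y' hy'
    have := (GKaux.Q_hasDeriv hs (hT1 x y' hy'.1 hy'.2)).2.comp y' (hTy y' hy'.1)
    exact this
  have hevy : deriv (fun u => greenKernel s w x u) =ᶠ[nhds y]
      fun y' => GKaux.Q1 s (1 + ((x - a) ^ 2 + (y' - b) ^ 2) / (2 * y' * b))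
        * ((y' ^ 2 - b ^ 2 - (x - a) ^ 2) / (2 * y' ^ 2 * b)) :=
    Filter.eventuallyEq_of_mem (hUy.mem_nhds hymem) (fun y' hy' => (hDy y' hy').deriv)
  have hTyy : HasDerivAt (fun u : ℝ => (u ^ 2 - b ^ 2 - (x - a) ^ 2) / (2 * u ^ 2 * b))
      ((b ^ 2 + (x - a) ^ 2) / (y ^ 3 * b)) y := by
    have hnum : HasDerivAt (fun u : ℝ => u ^ 2 - b ^ 2 - (x - a) ^ 2) (2 * y) y := by
      have := ((hasDerivAt_pow 2 y).sub_const (b ^ 2)).sub_const ((x - a) ^ 2)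
      refine this.congr_deriv (Eq.symm ?_)
      all_goals try simp only [id_eq]
      all_goals try push_cast
      all_goals ring
    have hden : HasDerivAt (fun u : ℝ => 2 * u ^ 2 * b) (4 * y * b) y := by
      have := ((hasDerivAt_pow 2 y).const_mul 2).mul_const b
      refine this.congr_deriv (Eq.symm ?_)
      all_goals try simp only [id_eq]
      all_goals try push_cast
      all_goals ring
    have hden0 : 2 * y ^ 2 * b ≠ 0 := by positivity
    have h2 := hnum.div hden hden0
    refine h2.congr_deriv (Eq.symm ?_)
    field_simp
    ring
  have hD2y : HasDerivAt
      (fun y' => GKaux.Q1 s (1 + ((x - a) ^ 2 + (y' - b) ^ 2) / (2 * y' * b))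
        * ((y' ^ 2 - b ^ 2 - (x - a) ^ 2) / (2 * y' ^ 2 * b)))
      (GKaux.Q2 s (1 + ((x - a) ^ 2 + (y - b) ^ 2) / (2 * y * b))
          * ((y ^ 2 - b ^ 2 - (x - a) ^ 2) / (2 * y ^ 2 * b)) ^ 2
        + GKaux.Q1 s (1 + ((x - a) ^ 2 + (y - b) ^ 2) / (2 * y * b))
          * ((b ^ 2 + (x - a) ^ 2) / (y ^ 3 * b))) y := by
    have hcomp := (GKaux.Q1_hasDeriv hs (hT1 x y hy hne)).2.comp y (hTy y hy)
    have := hcomp.mul hTyy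
    refine this.congr_deriv (Eq.symm ?_)
    simp only [Function.comp_apply, GKaux.Q1, GKaux.Q2]
    ring
  have dyy : deriv (deriv (fun y' : ℝ => greenKernel s w x y')) y
      = GKaux.Q2 s (1 + ((x - a) ^ 2 + (y - b) ^ 2) / (2 * y * b))
          * ((y ^ 2 - b ^ 2 - (x - a) ^ 2) / (2 * y ^ 2 * b)) ^ 2
        + GKaux.Q1 s (1 + ((x - a) ^ 2 + (y - b) ^ 2) / (2 * y * b))
          * ((b ^ 2 + (x - a) ^ 2) / (y ^ 3 * b)) := by
    rw [Filter.EventuallyEq.deriv_eq hevy]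
    exact hD2y.deriv
  ---- assembly
  set t := 1 + ((x - a) ^ 2 + (y - b) ^ 2) / (2 * y * b) with htdef
  have ht : 1 < t := hT1 x y hy hne
  have hODE := GKaux.legendreQ_ODE (t := t) hs ht
  have idA : y ^ 2 * (((x - a) / (y * b)) ^ 2
      + ((y ^ 2 - b ^ 2 - (x - a) ^ 2) / (2 * y ^ 2 * b)) ^ 2) = t ^ 2 - 1 := by
    rw [htdef]
    field_simp
    ring
  have idB : y ^ 2 * (1 / (y * b) + (b ^ 2 + (x - a) ^ 2) / (y ^ 3 * b)) = 2 * t := by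
    rw [htdef]
    field_simp
    ring
  have hgk : greenKernel s w x y = legendreQ s t := rfl
  rw [dxx, dyy, hgk]
  calc y ^ 2 * ((GKaux.Q2 s t * ((x - a) / (y * b)) ^ 2 + GKaux.Q1 s t * (1 / (y * b)))
        + (GKaux.Q2 s t * ((y ^ 2 - b ^ 2 - (x - a) ^ 2) / (2 * y ^ 2 * b)) ^ 2
          + GKaux.Q1 s t * ((b ^ 2 + (x - a) ^ 2) / (y ^ 3 * b))))
      = GKaux.Q2 s t * (y ^ 2 * (((x - a) / (y * b)) ^ 2
          + ((y ^ 2 - b ^ 2 - (x - a) ^ 2) / (2 * y ^ 2 * b)) ^ 2))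
        + GKaux.Q1 s t * (y ^ 2 * (1 / (y * b) + (b ^ 2 + (x - a) ^ 2) / (y ^ 3 * b))) := by ring
    _ = GKaux.Q2 s t * (t ^ 2 - 1) + GKaux.Q1 s t * (2 * t) := by rw [idA, idB]
    _ = s * (s - 1) * legendreQ s t := by
        rw [show (∫ v in Set.Ioi (0:ℝ), GKaux.F2 s t v) = GKaux.Q2 s t from rfl,
          show (∫ v in Set.Ioi (0:ℝ), GKaux.F1 s t v) = GKaux.Q1 s t from rfl] at hODE
        linarith
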